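/- There exists ρ0 ∈ (0,1) such that for every ρ ∈ (ρ0, 1) there exist constants b, b' > 0 with the following property: if (Y_z)_{z∈ℤ²} are independent, identically distributed {0,1}-valued random variables with P(Y_z = 1) = ρ, then for every integer s ≥ 1, P(there exists a lattice animal A with at least s sites and Σ_{z∈A} Y_z < b·s) ≤ e^{−b'·s}. -/

import Mathlib

open MeasureTheory ProbabilityTheory
open scoped ENNReal

def LatAdj (z w : ℤ × ℤ) : Prop := (z.1 - w.1).natAbs + (z.2 - w.2).natAbs = 1

def IsLatticeAnimal (A : Finset (ℤ × ℤ)) : Prop :=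
  (0, 0) ∈ A ∧
    ∀ z ∈ A, Relation.ReflTransGen (fun a b => LatAdj a b ∧ a ∈ A ∧ b ∈ A) (0, 0) z

abbrev P2 := ℤ × ℤ

def stepRel (A : Finset P2) (a b : P2) : Prop := LatAdj a b ∧ a ∈ A ∧ b ∈ A

def Reach (A : Finset P2) (x y : P2) : Prop := Relation.ReflTransGen (stepRel A) x y

def reachN (A : Finset P2) : ℕ → P2 → P2 → Prop
  | 0 => fun x y => x = y
  | n + 1 => fun x y => ∃ w, reachN A n x w ∧ stepRel A w y

lemma reach_iff {A : Finset P2} {x y : P2} : Reach A x y ↔ ∃ n, reachN A n x y := by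
  constructor
  · intro h
    induction h with
    | refl => exact ⟨0, rfl⟩
    | tail _ hstep ih => obtain ⟨n, hn⟩ := ih; exact ⟨n + 1, _, hn, hstep⟩
  · rintro ⟨n, hn⟩
    induction n generalizing y with
    | zero => cases hn; exact Relation.ReflTransGen.refl
    | succ n ih => obtain ⟨w, hw, hstep⟩ := hn; exact (ih hw).tail hstep

noncomputable def distIn (A : Finset P2) (v y : P2) : ℕ := sInf {n | reachN A n v y}

lemma latAdj_ne {a b : P2} (h : LatAdj a b) : a ≠ b := by
  rintro rfl
  simp [LatAdj] at h

lemma exists_removable (A : Finset P2) (v : P2) (hv : v ∈ A)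
    (hconn : ∀ y ∈ A, Reach A v y) (hcard : 2 ≤ A.card) :
    ∃ z ∈ A, z ≠ v ∧ ∀ y ∈ A.erase z, Reach (A.erase z) v y := by
  obtain ⟨z, hz, hmax⟩ := A.exists_max_image (distIn A v) ⟨v, hv⟩
  have hne : ∀ y ∈ A, {n | reachN A n v y}.Nonempty := fun y hy =>
    reach_iff.mp (hconn y hy)
  have hspec : ∀ y ∈ A, reachN A (distIn A v y) v y := fun y hy =>
    Nat.sInf_mem (hne y hy)
  have hdist0 : ∀ y ∈ A, distIn A v y = 0 → v = y := by
    intro y hy h0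
    have := hspec y hy
    rwa [h0] at this
  -- pick some y₀ ≠ v to see distIn v z ≥ 1
  obtain ⟨y₀, hy₀, hy₀v⟩ := Finset.exists_mem_ne (show 1 < A.card by omega) v
  have hzpos : 1 ≤ distIn A v z := by
    by_contra h
    have h0 : distIn A v z = 0 := by omega
    have hy₀pos : distIn A v y₀ ≠ 0 := fun h' => hy₀v (hdist0 y₀ hy₀ h').symm
    have := hmax y₀ hy₀
    omega
  have hzv : z ≠ v := by
    intro h
    have : distIn A v z = 0 := by rw [h]; exact Nat.sInf_eq_zero.mpr (Or.inl rfl)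
    omega
  refine ⟨z, hz, hzv, ?_⟩
  -- strong induction on the distance
  have key : ∀ n, ∀ y ∈ A, y ≠ z → distIn A v y ≤ n → Reach (A.erase z) v y := by
    intro n
    induction n with
    | zero =>
      intro y hy hyz h0
      have := hdist0 y hy (by omega)
      subst this
      exact Relation.ReflTransGen.refl
    | succ n ih =>
      intro y hy hyz hle
      rcases Nat.eq_zero_or_pos (distIn A v y) with h0 | hpos
      · have := hdist0 y hy h0; subst this; exact Relation.ReflTransGen.refl
      · obtain ⟨m, hm⟩ : ∃ m, distIn A v y = m + 1 := ⟨distIn A v y - 1, by omega⟩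
        have hreach := hspec y hy
        rw [hm] at hreach
        obtain ⟨w, hw, hstep⟩ := hreach
        have hwA : w ∈ A := hstep.2.1
        have hwle : distIn A v w ≤ m := Nat.sInf_le hw
        have hwz : w ≠ z := by
          intro h
          subst h
          have := hmax y hy
          omega
        have hvw : Reach (A.erase z) v w := ih w hwA hwz (by omega)
        exact hvw.tail ⟨hstep.1, Finset.mem_erase.mpr ⟨hwz, hwA⟩,
          Finset.mem_erase.mpr ⟨hyz, hy⟩⟩
  intro y hy
  rw [Finset.mem_erase] at hy
  exact key (distIn A v y) y hy.2 hy.1 le_rfl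

def dirs : Fin 5 → P2 := ![(1,0), (-1,0), (0,1), (0,-1), (0,0)]

def walkPts : P2 → List (Fin 5) → List P2
  | x, [] => [x]
  | x, d :: l => x :: walkPts (x + dirs d) l

def walkEnd (x : P2) (l : List (Fin 5)) : P2 := l.foldl (fun p d => p + dirs d) x

lemma walkEnd_nil (x : P2) : walkEnd x ([] : List (Fin 5)) = x := rfl

lemma walkEnd_cons (x : P2) (d : Fin 5) (l : List (Fin 5)) :
    walkEnd x (d :: l) = walkEnd (x + dirs d) l := rfl

lemma self_mem_walkPts (x : P2) (l : List (Fin 5)) : x ∈ walkPts x l := by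
  cases l <;> simp [walkPts]

lemma mem_walkPts_append (x : P2) (a b : List (Fin 5)) (z : P2) :
    z ∈ walkPts x (a ++ b) ↔ z ∈ walkPts x a ∨ z ∈ walkPts (walkEnd x a) b := by
  induction a generalizing x with
  | nil =>
    simp only [List.nil_append, walkPts, walkEnd_nil, List.mem_singleton]
    constructor
    · exact Or.inr
    · rintro (rfl | h)
      · exact self_mem_walkPts _ b
      · exact h
  | cons d a ih =>
    simp only [List.cons_append, walkPts, List.mem_cons, walkEnd_cons, List.append_eq]
    rw [ih]
    tauto

lemma exists_split (x : P2) (l : List (Fin 5)) (p : P2) (hp : p ∈ walkPts x l) :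
    ∃ a b, l = a ++ b ∧ walkEnd x a = p := by
  induction l generalizing x with
  | nil =>
    simp only [walkPts, List.mem_singleton] at hp
    exact ⟨[], [], rfl, hp.symm⟩
  | cons d l ih =>
    simp only [walkPts, List.mem_cons] at hp
    rcases hp with rfl | hp
    · exact ⟨[], d :: l, rfl, rfl⟩
    · obtain ⟨a, b, rfl, hend⟩ := ih _ hp
      exact ⟨d :: a, b, rfl, by rw [walkEnd_cons]; exact hend⟩

lemma latAdj_dirs {p z : P2} (h : LatAdj p z) :
    ∃ d d' : Fin 5, p + dirs d = z ∧ z + dirs d' = p := by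
  have h4 : (z.1 = p.1 + 1 ∧ z.2 = p.2) ∨ (z.1 = p.1 - 1 ∧ z.2 = p.2) ∨
      (z.1 = p.1 ∧ z.2 = p.2 + 1) ∨ (z.1 = p.1 ∧ z.2 = p.2 - 1) := by
    unfold LatAdj at h; omega
  rcases h4 with ⟨h1, h2⟩ | ⟨h1, h2⟩ | ⟨h1, h2⟩ | ⟨h1, h2⟩
  · exact ⟨0, 1, by simp [dirs, Prod.ext_iff, h1, h2] <;> omega⟩
  · exact ⟨1, 0, by simp [dirs, Prod.ext_iff, h1, h2] <;> omega⟩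
  · exact ⟨2, 3, by simp [dirs, Prod.ext_iff, h1, h2] <;> omega⟩
  · exact ⟨3, 2, by simp [dirs, Prod.ext_iff, h1, h2] <;> omega⟩

lemma spanning_walk : ∀ (n : ℕ) (A : Finset P2) (v : P2), v ∈ A →
    (∀ y ∈ A, Reach A v y) → A.card = n + 1 →
    ∃ l : List (Fin 5), l.length = 2 * n ∧ ∀ z, z ∈ walkPts v l ↔ z ∈ A := by
  intro n
  induction n with
  | zero =>
    intro A v hv _ hcard
    obtain ⟨a, rfl⟩ := Finset.card_eq_one.mp hcard
    refine ⟨[], rfl, ?_⟩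
    intro z
    simp only [Finset.mem_singleton] at hv
    subst hv
    simp [walkPts]
  | succ n ih =>
    intro A v hv hconn hcard
    obtain ⟨z, hz, hzv, hconn'⟩ := exists_removable A v hv hconn (by omega)
    have hvA' : v ∈ A.erase z := Finset.mem_erase.mpr ⟨fun h => hzv h.symm, hv⟩
    have hcard' : (A.erase z).card = n + 1 := by
      rw [Finset.card_erase_of_mem hz]; omega
    obtain ⟨l', hlen', hcov'⟩ := ih (A.erase z) v hvA' hconn' hcard'
    -- find a neighbor p of z inside A.erase z
    have hzreach := hconn z hz
    rcases hzreach.cases_tail with h | ⟨p, _, hstep⟩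
    · exact absurd h hzv
    · have hadj : LatAdj p z := hstep.1
      have hpA : p ∈ A := hstep.2.1
      have hpz : p ≠ z := latAdj_ne hadj
      have hpA' : p ∈ A.erase z := Finset.mem_erase.mpr ⟨hpz, hpA⟩
      have hpw : p ∈ walkPts v l' := (hcov' p).mpr hpA'
      obtain ⟨a, b, rfl, hend⟩ := exists_split v l' p hpw
      obtain ⟨d, d', hd, hd'⟩ := latAdj_dirs hadj
      refine ⟨a ++ d :: d' :: b, ?_, ?_⟩
      · have := hlen'
        simp only [List.length_append, List.length_cons] at this ⊢
        omega
      · intro x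
        have h1 : x ∈ walkPts v (a ++ d :: d' :: b) ↔
            x ∈ walkPts v a ∨ x = p ∨ x = z ∨ x ∈ walkPts p b := by
          rw [mem_walkPts_append, hend]
          simp only [walkPts, hd, hd', List.mem_cons]
          try tauto
        have h2 : x ∈ walkPts v (a ++ b) ↔ x ∈ walkPts v a ∨ x ∈ walkPts p b := by
          rw [mem_walkPts_append, hend]
        rw [h1]
        constructor
        · rintro (h | rfl | rfl | h)
          · exact Finset.mem_of_mem_erase ((hcov' x).mp (h2.mpr (Or.inl h)))
          · exact hpA
          · exact hz
          · exact Finset.mem_of_mem_erase ((hcov' x).mp (h2.mpr (Or.inr h)))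
        · intro hx
          by_cases hxz : x = z
          · tauto
          · have : x ∈ A.erase z := Finset.mem_erase.mpr ⟨hxz, hx⟩
            have := h2.mp ((hcov' x).mpr this)
            tauto

lemma prune : ∀ (n : ℕ) (A : Finset P2) (v : P2), v ∈ A →
    (∀ y ∈ A, Reach A v y) → A.card = n → ∀ s : ℕ, 1 ≤ s → s ≤ A.card →
    ∃ B : Finset P2, B ⊆ A ∧ v ∈ B ∧ (∀ y ∈ B, Reach B v y) ∧ B.card = s := by
  intro n
  induction n with
  | zero => intro A v _ _ hcard s hs hsA; omega
  | succ n ih =>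
    intro A v hv hconn hcard s hs hsA
    rcases eq_or_lt_of_le hsA with h | h
    · exact ⟨A, subset_refl A, hv, hconn, h.symm⟩
    · obtain ⟨z, hz, hzv, hconn'⟩ := exists_removable A v hv hconn (by omega)
      have hvA' : v ∈ A.erase z := Finset.mem_erase.mpr ⟨fun h => hzv h.symm, hv⟩
      have hcard' : (A.erase z).card = n := by rw [Finset.card_erase_of_mem hz]; omega
      obtain ⟨B, hBsub, hvB, hBconn, hBcard⟩ :=
        ih (A.erase z) v hvA' hconn' hcard' s hs (by omega)
      exact ⟨B, hBsub.trans (Finset.erase_subset z A), hvB, hBconn, hBcard⟩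

/-- Every lattice animal with at least `s ≥ 1` sites contains a sub-animal of exactly `s`
sites which is covered by a walk from the origin with `2*(s-1)` steps. -/
lemma animal_walk {A : Finset P2} (hA : IsLatticeAnimal A) {s : ℕ} (hs : 1 ≤ s)
    (hsA : s ≤ A.card) :
    ∃ l : List (Fin 5), l.length = 2 * (s - 1) ∧
      (walkPts (0,0) l).toFinset ⊆ A ∧ (walkPts (0,0) l).toFinset.card = s := by
  obtain ⟨h0, hconn⟩ := hA
  obtain ⟨B, hBsub, hvB, hBconn, hBcard⟩ := prune A.card A (0,0) h0 hconn rfl s hs hsA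
  obtain ⟨l, hlen, hcov⟩ := spanning_walk (s - 1) B (0,0) hvB hBconn (by omega)
  have hset : (walkPts ((0:ℤ),(0:ℤ)) l).toFinset = B := by
    ext x
    rw [List.mem_toFinset]
    exact hcov x
  exact ⟨l, hlen, by rw [hset]; exact hBsub, by rw [hset]; exact hBcard⟩
section Prob
variable {Ω : Type} [m : MeasurableSpace Ω] {μ : Measure Ω}

lemma meas_zero (hprob : IsProbabilityMeasure μ) (Y : P2 → Ω → ℝ)
    (hmeas : ∀ z, Measurable (Y z)) (h01 : ∀ z ω, Y z ω = 0 ∨ Y z ω = 1)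
    {ρ : ℝ} (hρ0 : 0 ≤ ρ) (hp : ∀ z, μ {ω | Y z ω = 1} = ENNReal.ofReal ρ)
    (z : P2) : μ {ω | Y z ω = 0} = ENNReal.ofReal (1 - ρ) := by
  have hset : {ω | Y z ω = 0} = {ω | Y z ω = 1}ᶜ := by
    ext ω
    simp only [Set.mem_setOf_eq, Set.mem_compl_iff]
    constructor
    · intro h h1; rw [h] at h1; norm_num at h1
    · intro h; exact (h01 z ω).resolve_right h
  have hm1 : MeasurableSet {ω | Y z ω = 1} := (hmeas z) (measurableSet_singleton 1)
  rw [hset, measure_compl hm1 (measure_ne_top μ _), hp z, measure_univ,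
    ENNReal.ofReal_sub 1 hρ0, ENNReal.ofReal_one]

lemma B_bound (hprob : IsProbabilityMeasure μ) (Y : P2 → Ω → ℝ)
    (hmeas : ∀ z, Measurable (Y z)) (h01 : ∀ z ω, Y z ω = 0 ∨ Y z ω = 1)
    (hindep : iIndepFun Y μ)
    {ρ : ℝ} (hρ0 : 0 ≤ ρ) (hp : ∀ z, μ {ω | Y z ω = 1} = ENNReal.ofReal ρ)
    (B : Finset P2) {s : ℕ} (hB : B.card = s) (hs : 1 ≤ s) :
    μ {ω | ∑ z ∈ B, Y z ω < (1/2 : ℝ) * s} ≤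
      (s.choose (s - (s-1)/2) : ℝ≥0∞) * ENNReal.ofReal (1 - ρ) ^ (s - (s-1)/2) := by
  classical
  set k := s - (s-1)/2 with hk
  have hsub : {ω | ∑ z ∈ B, Y z ω < (1/2 : ℝ) * s} ⊆
      ⋃ S ∈ B.powersetCard k, ⋂ z ∈ S, {ω | Y z ω = 0} := by
    intro ω hω
    simp only [Set.mem_setOf_eq] at hω
    set o := (B.filter (fun z => Y z ω = 1)).card with ho
    have hsum : ∑ z ∈ B, Y z ω = (o : ℝ) := by
      rw [← Finset.sum_filter_add_sum_filter_not B (fun z => Y z ω = 1) (fun z => Y z ω)]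
      have h1 : ∑ z ∈ B.filter (fun z => Y z ω = 1), Y z ω = (o : ℝ) := by
        rw [Finset.sum_congr rfl (fun z hz => (Finset.mem_filter.mp hz).2)]
        simp [ho]
      have h2 : ∑ z ∈ B.filter (fun z => ¬ Y z ω = 1), Y z ω = 0 :=
        Finset.sum_eq_zero (fun z hz => (h01 z ω).resolve_right (Finset.mem_filter.mp hz).2)
      rw [h1, h2, add_zero]
    have h2o : 2 * o < s := by
      have : (o : ℝ) < (1/2 : ℝ) * s := hsum ▸ hω
      have : (2 * o : ℝ) < (s : ℝ) := by linarith
      exact_mod_cast this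
    have hZ : (B.filter (fun z => Y z ω = 0)).card = s - o := by
      have hfeq : B.filter (fun z => Y z ω = 0) = B.filter (fun z => ¬ Y z ω = 1) := by
        apply Finset.filter_congr
        intro z _
        constructor
        · intro h h1; rw [h] at h1; norm_num at h1
        · intro h; exact (h01 z ω).resolve_right (by simpa using h)
      have := Finset.card_filter_add_card_filter_not
        (s := B) (p := fun z => Y z ω = 1)
      rw [hfeq]
      omega
    have hkZ : k ≤ (B.filter (fun z => Y z ω = 0)).card := by rw [hZ]; omega
    obtain ⟨S, hSsub, hScard⟩ := Finset.exists_subset_card_eq hkZ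
    have hSB : S ∈ B.powersetCard k :=
      Finset.mem_powersetCard.mpr ⟨hSsub.trans (Finset.filter_subset _ _), hScard⟩
    refine Set.mem_biUnion hSB ?_
    refine Set.mem_iInter₂.mpr (fun z hz => ?_)
    exact (Finset.mem_filter.mp (hSsub hz)).2
  calc μ {ω | ∑ z ∈ B, Y z ω < (1/2 : ℝ) * s}
      ≤ μ (⋃ S ∈ B.powersetCard k, ⋂ z ∈ S, {ω | Y z ω = 0}) := measure_mono hsub
    _ ≤ ∑ S ∈ B.powersetCard k, μ (⋂ z ∈ S, {ω | Y z ω = 0}) :=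
        measure_biUnion_finset_le _ _
    _ ≤ ∑ _S ∈ B.powersetCard k, ENNReal.ofReal (1 - ρ) ^ k := by
        apply Finset.sum_le_sum
        intro S hS
        have hScard := (Finset.mem_powersetCard.mp hS).2
        have hmeasS : ∀ z ∈ S, MeasurableSet[MeasurableSpace.comap (Y z) inferInstance]
            {ω | Y z ω = 0} := fun z _ => ⟨{0}, measurableSet_singleton 0, rfl⟩
        rw [hindep.meas_biInter hmeasS]
        rw [Finset.prod_congr rfl (fun z _ => meas_zero hprob Y hmeas h01 hρ0 hp z)]
        rw [Finset.prod_const, hScard]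
    _ = (s.choose k : ℝ≥0∞) * ENNReal.ofReal (1 - ρ) ^ k := by
        rw [Finset.sum_const, Finset.card_powersetCard, hB, nsmul_eq_mul]

end Prob

lemma ofFn_get_cast {α : Type*} (l : List α) {n : ℕ} (h : l.length = n) :
    List.ofFn (fun i : Fin n => l.get (Fin.cast h.symm i)) = l := by
  subst h
  simp

lemma choose_le_two_pow' {s k : ℕ} (hk : k ≤ s) : s.choose k ≤ 2 ^ s := by
  calc s.choose k ≤ ∑ i ∈ Finset.range (s + 1), s.choose i :=
        Finset.single_le_sum (fun i _ => Nat.zero_le _) (Finset.mem_range.mpr (by omega))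
    _ = 2 ^ s := Nat.sum_range_choose s

/-- There is `ρ0 ∈ (0,1)` such that for every `ρ ∈ (ρ0,1)` there are
constants `b, b' > 0` with: for every i.i.d. family `(Y_z)_{z ∈ ℤ²}` of `{0,1}`-valued
random variables with `P(Y_z = 1) = ρ` and every `s ≥ 1`,
`P(∃ lattice animal A with ≥ s sites and Σ_{z ∈ A} Y_z < b s) ≤ e^{-b' s}`. -/
theorem stmt4 :
    ∃ ρ0 : ℝ, 0 < ρ0 ∧ ρ0 < 1 ∧
      ∀ ρ : ℝ, ρ0 < ρ → ρ < 1 →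
        ∃ b > (0 : ℝ), ∃ b' > (0 : ℝ),
          ∀ (Ω : Type) (m : MeasurableSpace Ω) (μ : Measure Ω), IsProbabilityMeasure μ →
          ∀ Y : ℤ × ℤ → Ω → ℝ,
            (∀ z, Measurable (Y z)) →
            (∀ z ω, Y z ω = 0 ∨ Y z ω = 1) →
            iIndepFun Y μ →
            (∀ z w : ℤ × ℤ, IdentDistrib (Y z) (Y w) μ μ) →
            (∀ z, μ {ω | Y z ω = 1} = ENNReal.ofReal ρ) →
            ∀ s : ℕ, 1 ≤ s →
              μ {ω | ∃ A : Finset (ℤ × ℤ), IsLatticeAnimal A ∧ s ≤ A.card ∧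
                  ∑ z ∈ A, Y z ω < b * s} ≤ ENNReal.ofReal (Real.exp (-b' * s)) := by
  classical
  set ε : ℝ := Real.exp (-1) / 50 with hε_def
  have hεpos : 0 < ε := by positivity
  have hexp1 : Real.exp (-1) < 1 := by
    calc Real.exp (-1) < Real.exp 0 := Real.exp_lt_exp.mpr (by norm_num)
      _ = 1 := Real.exp_zero
  have hε1 : ε < 1 := by rw [hε_def]; nlinarith [Real.exp_pos (-1)]
  refine ⟨1 - ε ^ 2, by nlinarith, by nlinarith, ?_⟩
  intro ρ hρlo hρhi
  refine ⟨1/2, by norm_num, 1, by norm_num, ?_⟩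
  intro Ω m μ hprob Y hmeas h01 hindep _hident hp s hs
  have hρ0 : (0 : ℝ) ≤ ρ := by nlinarith
  have h1ρ0 : (0 : ℝ) ≤ 1 - ρ := by linarith
  have h1ρε : 1 - ρ ≤ ε ^ 2 := by linarith
  set k := s - (s-1)/2 with hk
  have hks : k ≤ s := by omega
  have hs2k : s ≤ 2 * k := by omega
  set L := 2 * (s - 1) with hL
  -- the decoded candidate sets
  set D : (Fin L → Fin 5) → Finset P2 :=
    (fun f => (walkPts ((0:ℤ),(0:ℤ)) (List.ofFn f)).toFinset) with hD
  set E : (Fin L → Fin 5) → Set Ω :=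
    (fun f => {ω | (D f).card = s ∧ ∑ z ∈ D f, Y z ω < (1/2 : ℝ) * s}) with hE
  have hsub : {ω | ∃ A : Finset (ℤ × ℤ), IsLatticeAnimal A ∧ s ≤ A.card ∧
      ∑ z ∈ A, Y z ω < (1/2 : ℝ) * s} ⊆ ⋃ f : Fin L → Fin 5, E f := by
    rintro ω ⟨A, hA, hsA, hsum⟩
    obtain ⟨l, hlen, hBsub, hBcard⟩ := animal_walk hA hs hsA
    have hlen' : l.length = L := by omega
    refine Set.mem_iUnion.mpr ⟨fun i => l.get (Fin.cast hlen'.symm i), ?_⟩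
    have hDf : D (fun i => l.get (Fin.cast hlen'.symm i)) =
        (walkPts ((0:ℤ),(0:ℤ)) l).toFinset := by
      rw [hD]
      simp only
      rw [ofFn_get_cast l hlen']
    constructor
    · rw [hDf]; exact hBcard
    · rw [hDf]
      have hmono : ∑ z ∈ (walkPts ((0:ℤ),(0:ℤ)) l).toFinset, Y z ω ≤ ∑ z ∈ A, Y z ω := by
        apply Finset.sum_le_sum_of_subset_of_nonneg hBsub
        intro z _ _
        rcases h01 z ω with h | h <;> rw [h] <;> norm_num
      exact lt_of_le_of_lt hmono hsum
  have hEf : ∀ f : Fin L → Fin 5,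
      μ (E f) ≤ (s.choose k : ℝ≥0∞) * ENNReal.ofReal (1 - ρ) ^ k := by
    intro f
    by_cases hcard : (D f).card = s
    · have : E f ⊆ {ω | ∑ z ∈ D f, Y z ω < (1/2 : ℝ) * s} := fun ω hω => hω.2
      calc μ (E f) ≤ μ {ω | ∑ z ∈ D f, Y z ω < (1/2 : ℝ) * s} := measure_mono this
        _ ≤ _ := B_bound hprob Y hmeas h01 hindep hρ0 hp (D f) hcard hs
    · have : E f = ∅ := by
        ext ω
        simp only [hE, Set.mem_setOf_eq, Set.mem_empty_iff_false, iff_false, not_and]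
        intro h
        exact absurd h hcard
      rw [this, measure_empty]
      exact zero_le
  have hcount : (Fintype.card (Fin L → Fin 5) : ℝ≥0∞) = ((5 : ℕ) : ℝ≥0∞) ^ L := by
    rw [Fintype.card_fun]
    simp
  calc μ {ω | ∃ A : Finset (ℤ × ℤ), IsLatticeAnimal A ∧ s ≤ A.card ∧
        ∑ z ∈ A, Y z ω < (1/2 : ℝ) * s}
      ≤ μ (⋃ f : Fin L → Fin 5, E f) := measure_mono hsub
    _ ≤ ∑' f : Fin L → Fin 5, μ (E f) := measure_iUnion_le _
    _ = ∑ f : Fin L → Fin 5, μ (E f) := tsum_fintype _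
    _ ≤ ∑ _f : Fin L → Fin 5, (s.choose k : ℝ≥0∞) * ENNReal.ofReal (1 - ρ) ^ k :=
        Finset.sum_le_sum (fun f _ => hEf f)
    _ = (Fintype.card (Fin L → Fin 5) : ℝ≥0∞) *
        ((s.choose k : ℝ≥0∞) * ENNReal.ofReal (1 - ρ) ^ k) := by
        rw [Finset.sum_const, nsmul_eq_mul]
        simp
    _ = ENNReal.ofReal ((5:ℝ) ^ L * ((s.choose k : ℝ) * (1 - ρ) ^ k)) := by
        rw [hcount, ENNReal.ofReal_mul (by positivity), ENNReal.ofReal_mul (by positivity),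
          ← ENNReal.ofReal_pow h1ρ0, ← ENNReal.ofReal_natCast (s.choose k),
          ← ENNReal.ofReal_natCast 5, ← ENNReal.ofReal_pow (by norm_num)]
        norm_num
    _ ≤ ENNReal.ofReal (Real.exp (-1 * s)) := by
        apply ENNReal.ofReal_le_ofReal
        have e1 : (1 - ρ) ^ k ≤ ε ^ s := by
          calc (1 - ρ) ^ k ≤ (ε ^ 2) ^ k := pow_le_pow_left₀ h1ρ0 h1ρε k
            _ = ε ^ (2 * k) := by rw [← pow_mul]
            _ ≤ ε ^ s := pow_le_pow_of_le_one hεpos.le hε1.le hs2k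
        have e2 : (5:ℝ) ^ L ≤ 25 ^ s := by
          calc (5:ℝ) ^ L = 25 ^ (s - 1) := by rw [hL, pow_mul]; norm_num
            _ ≤ 25 ^ s := pow_le_pow_right₀ (by norm_num) (by omega)
        have e3 : (s.choose k : ℝ) ≤ 2 ^ s := by
          exact_mod_cast choose_le_two_pow' hks
        calc (5:ℝ) ^ L * ((s.choose k : ℝ) * (1 - ρ) ^ k)
            ≤ 25 ^ s * (2 ^ s * ε ^ s) := by
              apply mul_le_mul e2 (mul_le_mul e3 e1 (by positivity) (by positivity))
                (by positivity) (by positivity)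
          _ = (50 * ε) ^ s := by rw [mul_pow, ← mul_assoc, ← mul_pow]; norm_num
          _ = Real.exp (-1) ^ s := by
              rw [show (50:ℝ) * ε = Real.exp (-1) by rw [hε_def]; ring]
          _ = Real.exp (-1 * s) := by
              rw [← Real.exp_nat_mul]
              ring_nf
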